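/- Let X be a Tychonoff space and 𝒜,ℬ ⊆ ℘(X) with ℬ an ideal-base. Consider the game 𝔊₁ in which in round n One plays a family 𝒰_n of open subsets of X such that every A ∈ 𝒜 is contained in some member of 𝒰_n, Two picks U_n ∈ 𝒰_n, and Two wins iff every B ∈ ℬ satisfies B ⊆ U_n for infinitely many n; and the game 𝔊₂ in which in round n One plays a set S_n ⊆ C(X) with 𝟎 ∈ cl_{C_𝒜(X)}(S_n), Two picks f_n ∈ S_n, and Two wins iff 𝟎 ∈ cl_{C_ℬ(X)}({f_n : n ∈ ω}). Then 𝔊₁ ≤_II 𝔊₂: if Two has a winning Markov strategy (respectively, winning strategy) in 𝔊₁ then Two has one in 𝔊₂, and if One has no winning strategy (respectively, no winning predetermined strategy) in 𝔊₁ then One has none in 𝔊₂. -/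

import Mathlib

/-!
ω-round single selection games, with winning condition given by a predicate `W` on the
sequence of Two's selections (Two wins a run iff `W` holds of it).
-/

/-- One has a winning strategy: `σ` maps Two's previous picks to a member of `𝒜`, and
defeats every compatible sequence of picks by Two. -/
def OneWinsG {β : Type*} (𝒜 : Set (Set β)) (W : (ℕ → β) → Prop) : Prop :=
  ∃ σ : List β → Set β, (∀ l, σ l ∈ 𝒜) ∧
    ∀ x : ℕ → β, (∀ n, x n ∈ σ (List.ofFn fun i : Fin n => x i)) → ¬ W x

/-- One has a winning predetermined strategy (a function of the round number only). -/
def OnePreG {β : Type*} (𝒜 : Set (Set β)) (W : (ℕ → β) → Prop) : Prop :=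
  ∃ p : ℕ → Set β, (∀ n, p n ∈ 𝒜) ∧ ∀ x : ℕ → β, (∀ n, x n ∈ p n) → ¬ W x

/-- Two has a winning strategy: `τ` maps One's previous moves and One's current move to
a selection from the current move, and wins against every legal sequence of moves by One. -/
def TwoWinsG {β : Type*} (𝒜 : Set (Set β)) (W : (ℕ → β) → Prop) : Prop :=
  ∃ τ : List (Set β) → Set β → β, (∀ l A, A ∈ 𝒜 → τ l A ∈ A) ∧
    ∀ A : ℕ → Set β, (∀ n, A n ∈ 𝒜) →
      W fun n => τ (List.ofFn fun i : Fin n => A i) (A n)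

/-- Two has a winning Markov strategy (a function of One's latest move and the round). -/
def TwoMarkovG {β : Type*} (𝒜 : Set (Set β)) (W : (ℕ → β) → Prop) : Prop :=
  ∃ τ : Set β → ℕ → β, (∀ A ∈ 𝒜, ∀ n, τ A n ∈ A) ∧
    ∀ A : ℕ → Set β, (∀ n, A n ∈ 𝒜) → W fun n => τ (A n) n

/-- `G₁(𝒜,W) ≤_II G₁(ℬ,V)`: transfer of winning (Markov) strategies for Two and of
non-existence of winning (predetermined) strategies for One. -/
def LeTwoG {β γ : Type*} (𝒜 : Set (Set β)) (W : (ℕ → β) → Prop)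
    (ℬ : Set (Set γ)) (V : (ℕ → γ) → Prop) : Prop :=
  (TwoMarkovG 𝒜 W → TwoMarkovG ℬ V) ∧ (TwoWinsG 𝒜 W → TwoWinsG ℬ V) ∧
  (¬ OneWinsG 𝒜 W → ¬ OneWinsG ℬ V) ∧ (¬ OnePreG 𝒜 W → ¬ OnePreG ℬ V)

open Set Topology

/-- `𝒜` is an ideal-base: any two members have their union contained in a third member. -/
def IdealBase {X : Type*} (𝒜 : Set (Set X)) : Prop :=
  ∀ A₁ ∈ 𝒜, ∀ A₂ ∈ 𝒜, ∃ A₃ ∈ 𝒜, A₁ ∪ A₂ ⊆ A₃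

variable {X : Type*} [TopologicalSpace X]

/-- The basic set `[f;A,ε] = {g : sup_{x∈A} |f x − g x| < ε}`, the sup condition being
expressed as the existence of a bound `δ < ε`. -/
def fnBall (f : C(X, ℝ)) (A : Set X) (ε : ℝ) : Set C(X, ℝ) :=
  {g | ∃ δ : ℝ, δ < ε ∧ ∀ x ∈ A, |f x - g x| ≤ δ}

/-- The `𝒜`-open topology on `C(X,ℝ)` (i.e. the topology of `C_𝒜(X)`), generated by the
sets `[f;A,ε]` for `f ∈ C(X,ℝ)`, `A ∈ 𝒜`, `ε > 0`. -/
def setOpenTop (𝒜 : Set (Set X)) : TopologicalSpace C(X, ℝ) :=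
  TopologicalSpace.generateFrom
    {S | ∃ f : C(X, ℝ), ∃ A ∈ 𝒜, ∃ ε : ℝ, 0 < ε ∧ S = fnBall f A ε}

/-- The collection `𝒩_{C_𝒜(X)}(𝟎)` of open neighborhoods of the zero function in
`C_𝒜(X)`. -/
def Nbhd0 (𝒜 : Set (Set X)) : Set (Set C(X, ℝ)) :=
  {U | IsOpen[setOpenTop 𝒜] U ∧ (0 : C(X, ℝ)) ∈ U}


/- ### Auxiliary machinery for the proof of `stmt11` -/

namespace Stmt11Aux

section ListAux

lemma getD_ofFn_lt {α : Type*} (S : ℕ → α) (d : α) {n i : ℕ} (h : i < n) :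
    (List.ofFn fun j : Fin n => S j).getD i d = S i := by
  rw [List.getD_eq_getElem _ _ (by simpa using h), List.getElem_ofFn]

lemma ofFn_getD {α β : Type*} (G : α → ℕ → β) (S : ℕ → α) (d : α) (n : ℕ) :
    (List.ofFn fun i : Fin (List.ofFn fun j : Fin n => S j).length =>
        G ((List.ofFn fun j : Fin n => S j).getD (i : ℕ) d) (i : ℕ))
      = List.ofFn fun i : Fin n => G (S i) i := by
  apply List.ext_get
  · simp
  · intro i h1 h2
    simp only [List.get_ofFn, Fin.coe_cast]
    rw [getD_ofFn_lt S d (by simpa using h2)]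

variable {γ δ : Type*}

/-- Iteratively build the list of Two's translated picks from One's strategy `σ` and a
run `u` of Two's moves in the other game. -/
noncomputable def buildL (pk : Set γ → ℕ → δ → γ) (σ : List γ → Set γ) (u : ℕ → δ) :
    ℕ → List γ
  | 0 => []
  | n + 1 => buildL pk σ u n ++ [pk (σ (buildL pk σ u n)) n (u n)]

noncomputable def buildF (pk : Set γ → ℕ → δ → γ) (σ : List γ → Set γ) (u : ℕ → δ)
    (n : ℕ) : γ :=
  pk (σ (buildL pk σ u n)) n (u n)

lemma buildL_eq_ofFn (pk : Set γ → ℕ → δ → γ) (σ : List γ → Set γ) (u : ℕ → δ) (n : ℕ) :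
    buildL pk σ u n = List.ofFn fun i : Fin n => buildF pk σ u i := by
  induction n with
  | zero => rfl
  | succ n ih =>
    rw [buildL, ih, List.ofFn_succ']
    simp [List.concat_eq_append, buildF, ih]

lemma buildL_congr (pk : Set γ → ℕ → δ → γ) (σ : List γ → Set γ) {u v : ℕ → δ} (n : ℕ)
    (h : ∀ i < n, u i = v i) : buildL pk σ u n = buildL pk σ v n := by
  induction n with
  | zero => rfl
  | succ n ih =>
    have h' := ih (fun i hi => h i (Nat.lt_succ_of_lt hi))
    rw [buildL, buildL, h', h n (Nat.lt_succ_self n)]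

end ListAux

variable {X : Type*} [TopologicalSpace X]

/-- `{x | |f x| < 1/(n+1)}`. -/
def Uof (f : C(X, ℝ)) (n : ℕ) : Set X := {x | |f x| < 1 / (n + 1)}

lemma epos (n : ℕ) : (0 : ℝ) < 1 / (n + 1) := by positivity

lemma Uof_isOpen (f : C(X, ℝ)) (n : ℕ) : IsOpen (Uof f n) :=
  isOpen_lt (continuous_abs.comp f.continuous) continuous_const

open Classical in
/-- Choose a witness `f ∈ S` for which `U = Uof f n`, if one exists. -/
noncomputable def pick (S : Set C(X, ℝ)) (n : ℕ) (U : Set X) : C(X, ℝ) :=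
  if h : ∃ f ∈ S, Uof f n = U then h.choose else 0

/-- The translated move of One. -/
def Tmap (S : Set C(X, ℝ)) (n : ℕ) : Set (Set X) := (fun f => Uof f n) '' S

open Classical in
lemma pick_spec {S : Set C(X, ℝ)} {n : ℕ} {U : Set X} (h : U ∈ Tmap S n) :
    pick S n U ∈ S ∧ Uof (pick S n U) n = U := by
  obtain ⟨f, hf, hfU⟩ := h
  have hex : ∃ f ∈ S, Uof f n = U := ⟨f, hf, hfU⟩
  rw [pick, dif_pos hex]
  exact ⟨hex.choose_spec.1, hex.choose_spec.2⟩

lemma Tmap_legal {𝒜 : Set (Set X)} {S : Set C(X, ℝ)}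
    (hS : (0 : C(X, ℝ)) ∈ closure[setOpenTop 𝒜] S) (n : ℕ) :
    (∀ U ∈ Tmap S n, IsOpen U) ∧ ∀ A ∈ 𝒜, ∃ U ∈ Tmap S n, A ⊆ U := by
  constructor
  · rintro U ⟨f, -, rfl⟩
    exact Uof_isOpen f n
  · intro A hA
    have hopen : IsOpen[setOpenTop 𝒜] (fnBall 0 A (1 / (n + 1))) :=
      TopologicalSpace.GenerateOpen.basic _ ⟨0, A, hA, 1 / (n + 1), epos n, rfl⟩
    have h0 : (0 : C(X, ℝ)) ∈ fnBall 0 A (1 / (n + 1)) :=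
      ⟨0, epos n, fun x _ => by simp⟩
    obtain ⟨g, hg1, hg2⟩ :=
      (@mem_closure_iff _ (setOpenTop 𝒜) 0 S).mp hS _ hopen h0
    obtain ⟨δ, hδ, hb⟩ := hg1
    refine ⟨Uof g n, ⟨g, hg2, rfl⟩, fun x hx => ?_⟩
    have := hb x hx
    simp only [ContinuousMap.zero_apply, zero_sub, abs_neg] at this
    exact lt_of_le_of_lt this hδ

lemma claim_aux {ℬ : Set (Set X)} (hB : IdealBase ℬ)
    (F : Set (Set C(X, ℝ))) (hFfin : F.Finite) :
    F ⊆ {S | ∃ g : C(X, ℝ), ∃ B ∈ ℬ, ∃ ε : ℝ, 0 < ε ∧ S = fnBall g B ε} →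
    (0 : C(X, ℝ)) ∈ ⋂₀ F →
    ∃ B η, (B ∈ ℬ ∨ B = (∅ : Set X)) ∧ 0 < η ∧
      ∀ h : C(X, ℝ), (∀ x ∈ B, |h x| < η) → h ∈ ⋂₀ F := by
  induction F, hFfin using Set.Finite.induction_on with
  | empty =>
    intro _ _
    exact ⟨∅, 1, Or.inr rfl, one_pos, fun h _ => by simp⟩
  | @insert s F hns hFfin ih =>
    intro hsub h0
    obtain ⟨g, B, hBmem, ε, hε, rfl⟩ := hsub (mem_insert _ _)
    have h0s : (0 : C(X, ℝ)) ∈ fnBall g B ε := h0 _ (mem_insert _ _)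
    have h0F : (0 : C(X, ℝ)) ∈ ⋂₀ F := fun t ht => h0 t (mem_insert_of_mem _ ht)
    obtain ⟨δ, hδ, hbd⟩ := h0s
    have hbd' : ∀ x ∈ B, |g x| ≤ δ := fun x hx => by simpa using hbd x hx
    obtain ⟨B₁, η₁, hB₁, hη₁, hprop⟩ :=
      ih (fun t ht => hsub (mem_insert_of_mem _ ht)) h0F
    obtain ⟨B₂, hB₂mem, hBsub, hB₁sub⟩ : ∃ B₂ ∈ ℬ, B ⊆ B₂ ∧ B₁ ⊆ B₂ := by
      rcases hB₁ with h1 | rfl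
      · obtain ⟨B₂, h2, h3⟩ := hB B hBmem B₁ h1
        exact ⟨B₂, h2, subset_union_left.trans h3, subset_union_right.trans h3⟩
      · exact ⟨B, hBmem, subset_rfl, empty_subset _⟩
    refine ⟨B₂, min ((ε - δ) / 2) η₁, Or.inl hB₂mem, lt_min (by linarith) hη₁, ?_⟩
    intro h hh t ht
    rcases ht with rfl | ht
    · refine ⟨δ + (ε - δ) / 2, by linarith, fun x hx => ?_⟩
      have h1 : |g x| ≤ δ := hbd' x hx
      have h2 : |h x| < min ((ε - δ) / 2) η₁ := hh x (hBsub hx)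
      have h3 : |g x - h x| ≤ |g x| + |h x| := abs_sub _ _
      have h4 : min ((ε - δ) / 2) η₁ ≤ (ε - δ) / 2 := min_le_left _ _
      linarith
    · exact hprop h (fun x hx =>
        lt_of_lt_of_le (hh x (hB₁sub hx)) (min_le_right _ _)) t ht

/-- Transfer of the winning condition from `𝔊₁` to `𝔊₂`. -/
lemma transfer {ℬ : Set (Set X)} (hB : IdealBase ℬ) (f : ℕ → C(X, ℝ))
    (U : ℕ → Set X) (hU : ∀ n, Uof (f n) n = U n)
    (hwin : ∀ B ∈ ℬ, {n | B ⊆ U n}.Infinite) :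
    (0 : C(X, ℝ)) ∈ closure[setOpenTop ℬ] (Set.range f) := by
  letI t : TopologicalSpace C(X, ℝ) := setOpenTop ℬ
  have hbasis := TopologicalSpace.isTopologicalBasis_of_subbasis
    (t := t) (s := {S | ∃ g : C(X, ℝ), ∃ B ∈ ℬ, ∃ ε : ℝ, 0 < ε ∧ S = fnBall g B ε}) rfl
  refine hbasis.mem_closure_iff.mpr ?_
  rintro o ⟨F, ⟨hFfin, hFsub⟩, rfl⟩ h0
  obtain ⟨B, η, hBor, hη, hprop⟩ := claim_aux hB F hFfin hFsub h0
  rcases hBor with hBmem | rfl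
  · obtain ⟨N, hN⟩ := exists_nat_one_div_lt (ε := η) hη
    obtain ⟨n, hn1, hn2⟩ := (hwin B hBmem).exists_gt N
    refine ⟨f n, hprop _ (fun x hx => ?_), mem_range_self n⟩
    have hx2 : x ∈ Uof (f n) n := by rw [hU n]; exact hn1 hx
    have h3 : (1 : ℝ) / (n + 1) < 1 / (N + 1) := by
      apply one_div_lt_one_div_of_lt (by positivity)
      have : (N : ℝ) < n := Nat.cast_lt.mpr hn2
      linarith
    exact lt_trans (lt_trans hx2 h3) hN
  · exact ⟨f 0, hprop _ (fun x hx => absurd hx (notMem_empty x)), mem_range_self 0⟩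

end Stmt11Aux

/-- For a Tychonoff space `X` and `𝒜, ℬ ⊆ ℘(X)` with `ℬ` an ideal-base,
`𝔊₁ ≤_II 𝔊₂`, where in `𝔊₁` One plays families of open sets in which every `A ∈ 𝒜` has
a superset, Two selects a member, and Two wins iff every `B ∈ ℬ` is contained in `U_n`
for infinitely many `n`; and in `𝔊₂` One plays sets `S ⊆ C(X,ℝ)` with
`𝟎 ∈ cl_{C_𝒜(X)}(S)`, Two selects `f_n ∈ S_n`, and Two wins iff
`𝟎 ∈ cl_{C_ℬ(X)}({f_n : n ∈ ω})`.
(These are `G₁(𝒪(X,𝒜), Λ(X,ℬ))` and `G₁(Ω_{C_𝒜(X),𝟎}, Ω_{C_ℬ(X),𝟎})`.) -/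
theorem stmt11 {X : Type*} [TopologicalSpace X] [T35Space X]
    (𝒜 ℬ : Set (Set X)) (hB : IdealBase ℬ) :
    LeTwoG
      {𝒰 : Set (Set X) | (∀ U ∈ 𝒰, IsOpen U) ∧ ∀ A ∈ 𝒜, ∃ U ∈ 𝒰, A ⊆ U}
      (fun U : ℕ → Set X => ∀ B ∈ ℬ, {n : ℕ | B ⊆ U n}.Infinite)
      {S : Set C(X, ℝ) | (0 : C(X, ℝ)) ∈ closure[setOpenTop 𝒜] S}
      (fun f : ℕ → C(X, ℝ) =>
        (0 : C(X, ℝ)) ∈ closure[setOpenTop ℬ] (Set.range f)) := by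
  classical
  open Stmt11Aux in
  refine ⟨?_, ?_, ?_, ?_⟩
  · -- Markov strategies for Two
    rintro ⟨τ, hτmem, hτwin⟩
    refine ⟨fun S n => pick S n (τ (Tmap S n) n), ?_, ?_⟩
    · intro S hS n
      exact (pick_spec (hτmem _ (Tmap_legal hS n) n)).1
    · intro S hS
      exact transfer hB _ (fun n => τ (Tmap (S n) n) n)
        (fun n => (pick_spec (hτmem _ (Tmap_legal (hS n) n) n)).2)
        (hτwin _ (fun n => Tmap_legal (hS n) n))
  · -- full strategies for Two
    rintro ⟨τ, hτmem, hτwin⟩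
    refine ⟨fun l S => pick S l.length
        (τ (List.ofFn fun i : Fin l.length => Tmap (l.getD (i : ℕ) ∅) (i : ℕ))
          (Tmap S l.length)), ?_, ?_⟩
    · intro l S hS
      exact (pick_spec (hτmem _ _ (Tmap_legal hS l.length))).1
    · intro S hS
      have hAleg : ∀ n, (fun n => Tmap (S n) n) n ∈
          {𝒰 : Set (Set X) | (∀ U ∈ 𝒰, IsOpen U) ∧ ∀ A ∈ 𝒜, ∃ U ∈ 𝒰, A ⊆ U} :=
        fun n => Tmap_legal (hS n) n
      refine transfer hB _
        (fun n => τ (List.ofFn fun i : Fin n => Tmap (S i) i) (Tmap (S n) n)) ?_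
        (hτwin _ hAleg)
      intro n
      show Uof (pick (S n) (List.ofFn fun i : Fin n => S i).length
        (τ (List.ofFn fun i : Fin (List.ofFn fun j : Fin n => S j).length =>
              Tmap ((List.ofFn fun j : Fin n => S j).getD (i : ℕ) ∅) (i : ℕ))
          (Tmap (S n) (List.ofFn fun i : Fin n => S i).length))) n = _
      rw [ofFn_getD (fun S n => Tmap S n) S ∅ n, List.length_ofFn]
      exact (pick_spec (hτmem _ _ (Tmap_legal (hS n) n))).2
  · -- One's full strategies
    intro hno h2
    apply hno
    obtain ⟨σ, hσleg, hσwin⟩ := h2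
    refine ⟨fun l => Tmap (σ (buildL pick σ (fun i => l.getD i (∅ : Set X)) l.length))
      l.length, fun l => Tmap_legal (hσleg _) _, ?_⟩
    intro x hx
    have hkey : ∀ n, x n ∈ Tmap (σ (buildL pick σ x n)) n := by
      intro n
      have h1 := hx n
      simp only [List.length_ofFn] at h1
      rwa [buildL_congr pick σ n
        (fun i hi => getD_ofFn_lt x (∅ : Set X) hi)] at h1
    intro hW
    have hmem : ∀ n, buildF pick σ x n ∈ σ (List.ofFn fun i : Fin n => buildF pick σ x i) := by
      intro n
      rw [← buildL_eq_ofFn pick σ x n]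
      exact (pick_spec (hkey n)).1
    exact hσwin (buildF pick σ x) hmem
      (transfer hB (buildF pick σ x) x (fun n => (pick_spec (hkey n)).2) hW)
  · -- One's predetermined strategies
    intro hno h2
    apply hno
    obtain ⟨p, hpleg, hpdef⟩ := h2
    refine ⟨fun n => Tmap (p n) n, fun n => Tmap_legal (hpleg n) n, ?_⟩
    intro x hx hW
    exact hpdef (fun n => pick (p n) n (x n)) (fun n => (pick_spec (hx n)).1)
      (transfer hB _ x (fun n => (pick_spec (hx n)).2) hW)
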